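/- arXiv:2603.09510 — 2 statements merged into one kernel-verified Lean document; each statement's English description precedes it below -/
import Mathlib

section
/- Let κ be a regular uncountable cardinal, S ⊆ κ stationary, and C ⊆ κ a club. Suppose for each α ∈ C we have an equivalence relation E_α on κ^κ, each with at most κ classes enumerated as ⟨x^α_i : 0 < i < κ⟩, and suppose an equivalence relation E on κ^κ satisfies: η E ξ iff there is a club D with η E_α ξ for all α ∈ D, and ¬(η E ξ) iff there is a club D with ¬(η E_α ξ) for all α ∈ D. Then the function F : κ^κ → κ^κ defined by F(η)(α) = i if α ∈ C and η ∈ x^α_i, and F(η)(α) = 0 otherwise, is a reduction of E to =^κ_S. -/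
def IsClubIn (κ : Cardinal) (C : Set Ordinal) : Prop :=
  C ⊆ Set.Iio κ.ord ∧
  (∀ α, α < κ.ord → 0 < α → (∀ β, β < α → (C ∩ Set.Ioo β α).Nonempty) → α ∈ C) ∧
  (∀ α, α < κ.ord → ∃ β ∈ C, α ≤ β)

def IsStatIn (κ : Cardinal) (S : Set Ordinal) : Prop :=
  S ⊆ Set.Iio κ.ord ∧ ∀ C, IsClubIn κ C → (S ∩ C).Nonempty

/-- Equivalence modulo `S`: the difference set intersected with `S` is non-stationary. -/
def eqModS (κ : Cardinal) (S : Set Ordinal) (f g : Ordinal → Ordinal) : Prop :=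
  ¬ IsStatIn κ ({α | f α ≠ g α} ∩ S)

lemma club_inter (κ : Cardinal) (hreg : κ.IsRegular) (hunc : Cardinal.aleph0 < κ)
    (C1 C2 : Set Ordinal) (h1 : IsClubIn κ C1) (h2 : IsClubIn κ C2) :
    IsClubIn κ (C1 ∩ C2) := by
  classical
  have hlim : Order.IsSuccLimit κ.ord := Cardinal.isSuccLimit_ord hunc.le
  refine ⟨fun x hx => h1.1 hx.1, ?_, ?_⟩
  · intro α hα hα0 hacc
    refine ⟨h1.2.1 α hα hα0 fun β hβ => ?_, h2.2.1 α hα hα0 fun β hβ => ?_⟩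
    · obtain ⟨γ, hγ⟩ := hacc β hβ
      exact ⟨γ, hγ.1.1, hγ.2⟩
    · obtain ⟨γ, hγ⟩ := hacc β hβ
      exact ⟨γ, hγ.1.2, hγ.2⟩
  · intro α hα
    -- one step: find a strictly larger element of a club
    have step : ∀ D : Set Ordinal, IsClubIn κ D → ∀ β, β < κ.ord →
        ∃ γ, γ ∈ D ∧ β < γ ∧ γ < κ.ord := by
      intro D hD β hβ
      obtain ⟨γ, hγD, hγ⟩ := hD.2.2 (β + 1) (hlim.succ_lt hβ)
      exact ⟨γ, hγD, lt_of_lt_of_le (Order.lt_succ β) hγ, hD.1 hγD⟩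
    set D : ℕ → Set Ordinal := fun n => if n % 2 = 0 then C1 else C2 with hDdef
    have hD : ∀ n, IsClubIn κ (D n) := by
      intro n; simp only [hDdef]; split <;> assumption
    let g' : ℕ → {γ : Ordinal // γ < κ.ord} := fun n =>
      Nat.rec ⟨α, hα⟩ (fun n p =>
        ⟨Classical.choose (step (D n) (hD n) p.1 p.2),
         (Classical.choose_spec (step (D n) (hD n) p.1 p.2)).2.2⟩) n
    let g : ℕ → Ordinal := fun n => (g' n).1
    have hg0 : g 0 = α := rfl
    have hglt : ∀ n, g n < κ.ord := fun n => (g' n).2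
    have hstep : ∀ n, g (n + 1) ∈ D n ∧ g n < g (n + 1) := by
      intro n
      have h := Classical.choose_spec (step (D n) (hD n) (g' n).1 (g' n).2)
      exact ⟨h.1, h.2.1⟩
    have hmono : StrictMono g := strictMono_nat_of_lt_succ fun n => (hstep n).2
    set s : Ordinal := ⨆ n, g n with hs
    have hgs : ∀ n, g n < s := fun n => lt_of_lt_of_le (hstep n).2 (Ordinal.le_iSup g (n + 1))
    have hslt : s < κ.ord := by
      rw [hs]
      exact Ordinal.iSup_lt_ord_lift (by rw [hreg.cof_eq]; simpa using hunc) hglt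
    have hspos : 0 < s := lt_of_le_of_lt (zero_le (a := g 0)) (hgs 0)
    have hmem : ∀ (Ci : Set Ordinal), (∀ n, n % 2 = 0 → Ci = C1 → g (n+1) ∈ Ci) →
        True := fun _ _ => trivial
    have hsC1 : s ∈ C1 := by
      refine h1.2.1 s hslt hspos fun β hβ => ?_
      obtain ⟨n, hn⟩ := Ordinal.lt_iSup_iff.1 hβ
      refine ⟨g (2 * n + 1), ?_, lt_of_lt_of_le hn (hmono.monotone (by omega : n ≤ 2 * n + 1)),
        hgs (2 * n + 1)⟩
      have := (hstep (2 * n)).1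
      simpa [hDdef, Nat.mul_mod_right] using this
    have hsC2 : s ∈ C2 := by
      refine h2.2.1 s hslt hspos fun β hβ => ?_
      obtain ⟨n, hn⟩ := Ordinal.lt_iSup_iff.1 hβ
      refine ⟨g (2 * n + 2), ?_, lt_of_lt_of_le hn (hmono.monotone (by omega : n ≤ 2 * n + 2)),
        hgs (2 * n + 2)⟩
      have := (hstep (2 * n + 1)).1
      have h2n : (2 * n + 1) % 2 = 1 := by omega
      simpa [hDdef, h2n] using this
    exact ⟨s, ⟨hsC1, hsC2⟩, le_of_lt (hg0 ▸ hgs 0)⟩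

theorem stmt4 (κ : Cardinal) (hreg : κ.IsRegular) (hunc : Cardinal.aleph0 < κ)
    (S : Set Ordinal) (hS : IsStatIn κ S)
    (C : Set Ordinal) (hC : IsClubIn κ C)
    (Eα : Ordinal → (Ordinal → Ordinal) → (Ordinal → Ordinal) → Prop)
    (x : Ordinal → Ordinal → Set (Ordinal → Ordinal))
    (hEquiv : ∀ α ∈ C, Equivalence (Eα α))
    (hpart : ∀ α ∈ C, ∀ η, ∃! i, 0 < i ∧ i < κ.ord ∧ η ∈ x α i)
    (hclasses : ∀ α ∈ C, ∀ η ξ, Eα α η ξ ↔ ∃ i, 0 < i ∧ i < κ.ord ∧ η ∈ x α i ∧ ξ ∈ x α i)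
    (E : (Ordinal → Ordinal) → (Ordinal → Ordinal) → Prop)
    (hEpos : ∀ η ξ, E η ξ ↔ ∃ D, IsClubIn κ D ∧ D ⊆ C ∧ ∀ α ∈ D, Eα α η ξ)
    (hEneg : ∀ η ξ, ¬ E η ξ ↔ ∃ D, IsClubIn κ D ∧ D ⊆ C ∧ ∀ α ∈ D, ¬ Eα α η ξ)
    (F : (Ordinal → Ordinal) → (Ordinal → Ordinal))
    (hF : ∀ η α i, α ∈ C → 0 < i → i < κ.ord → η ∈ x α i → F η α = i)
    (hF0 : ∀ η α, α ∉ C → F η α = 0) :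
    ∀ η ξ, E η ξ ↔ eqModS κ S (F η) (F ξ) := by
  intro η ξ
  constructor
  · intro hE hstat
    obtain ⟨D, hDclub, hDC, hDE⟩ := (hEpos η ξ).1 hE
    obtain ⟨β, ⟨hne, _⟩, hβD⟩ := hstat.2 D hDclub
    have hβC : β ∈ C := hDC hβD
    obtain ⟨i, hi0, hiκ, hηi, hξi⟩ := (hclasses β hβC η ξ).1 (hDE β hβD)
    exact hne (by rw [hF η β i hβC hi0 hiκ hηi, hF ξ β i hβC hi0 hiκ hξi])
  · intro h
    by_contra hnE
    obtain ⟨D, hDclub, hDC, hDE⟩ := (hEneg η ξ).1 hnE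
    refine h ⟨fun y hy => hS.1 hy.2, ?_⟩
    intro C' hC'
    have hDC' : IsClubIn κ (D ∩ C') := club_inter κ hreg hunc D C' hDclub hC'
    obtain ⟨β, hβS, hβD, hβC'⟩ := hS.2 (D ∩ C') hDC'
    have hβC : β ∈ C := hDC hβD
    refine ⟨β, ⟨?_, hβS⟩, hβC'⟩
    intro heq
    obtain ⟨i, ⟨hi0, hiκ, hηi⟩, _⟩ := hpart β hβC η
    obtain ⟨j, ⟨hj0, hjκ, hξj⟩, _⟩ := hpart β hβC ξ
    have hij : i = j := by
      rw [← hF η β i hβC hi0 hiκ hηi, ← hF ξ β j hβC hj0 hjκ hξj]; exact heq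
    exact hDE β hβD ((hclasses β hβC η ξ).2 ⟨i, hi0, hiκ, hηi, hij ▸ hξj⟩)
end

section
/- Let κ be regular uncountable and let T be a tree whose nodes are functions η : s → κ^m (s ≤ γ, for fixed m and γ < κ), with coordinate functions η_1,…,η_m. Suppose the filtration T^α = {η ∈ T : ran(η) ⊆ ϑ^m for some ϑ < α} is given. If η ∈ T and β is an ordinal such that sup{τ' : sup(ran(η_m ↾ τ')) < β} = τ with τ < dom(η), sup(ran(η_m ↾ τ)) ≤ β, and η↾τ ∉ acc(T^β) \ T^β, then: (1) η↾τ ∈ T^β; (2) η↾(τ+1) ∉ T^β. -/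
open Classical in
/-- Restriction of a node `p = (s, η)` (with domain length `s`) to length `τ`. -/
noncomputable def restrP (m : ℕ) (p : Ordinal × (Ordinal → Fin m → Ordinal)) (τ : Ordinal) :
    Ordinal × (Ordinal → Fin m → Ordinal) :=
  (τ, fun i k => if i < τ then p.2 i k else 0)

/-- The filtration level `T^β`: nodes whose range is contained in `ϑ^m` for some `ϑ < β`. -/
def filtLevel (m : ℕ) (T : Set (Ordinal × (Ordinal → Fin m → Ordinal))) (β : Ordinal) :
    Set (Ordinal × (Ordinal → Fin m → Ordinal)) :=
  {p ∈ T | ∃ ϑ < β, ∀ i < p.1, ∀ k, p.2 i k < ϑ}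

/-- `acc B`: limits (accumulation points) of branches of `B`: all proper restrictions lie in `B`. -/
def accSet (m : ℕ) (B : Set (Ordinal × (Ordinal → Fin m → Ordinal))) :
    Set (Ordinal × (Ordinal → Fin m → Ordinal)) :=
  {p | ∀ τ, τ < p.1 → restrP m p τ ∈ B}

theorem stmt10 (κ : Cardinal) (hreg : κ.IsRegular) (hunc : Cardinal.aleph0 < κ)
    (γ : Ordinal) (hγ : γ < κ.ord) (m : ℕ) (hm : 0 < m)
    (T : Set (Ordinal × (Ordinal → Fin m → Ordinal)))
    (hdom : ∀ p ∈ T, p.1 ≤ γ)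
    (hclosed : ∀ p ∈ T, ∀ τ, τ ≤ p.1 → restrP m p τ ∈ T)
    (η : Ordinal × (Ordinal → Fin m → Ordinal)) (hη : η ∈ T)
    (β τ : Ordinal)
    -- the m-th coordinate η_m is (strictly) increasing
    (hmono : ∀ i j, i < j → j < η.1 → η.2 i ⟨m - 1, by omega⟩ < η.2 j ⟨m - 1, by omega⟩)
    -- the sup of the range of η_m controls the other coordinates
    (hdomin : ∀ i, i < η.1 → ∀ k, η.2 i k ≤ η.2 i ⟨m - 1, by omega⟩)
    -- τ = sup{τ' : sup(ran(η_m ↾ τ')) < β}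
    (hτ : τ = sSup {τ' | τ' ≤ η.1 ∧
      sSup ((fun i => η.2 i ⟨m - 1, by omega⟩) '' Set.Iio τ') < β})
    (hτlt : τ < η.1)
    -- sup(ran(η_m ↾ τ)) ≤ β
    (hsup : sSup ((fun i => η.2 i ⟨m - 1, by omega⟩) '' Set.Iio τ) ≤ β)
    -- η↾τ ∉ acc(T^β) \ T^β
    (hnacc : restrP m η τ ∉ accSet m (filtLevel m T β) \ filtLevel m T β) :
    restrP m η τ ∈ filtLevel m T β ∧ restrP m η (τ + 1) ∉ filtLevel m T β := by

  set f : Ordinal → Ordinal := fun i => η.2 i ⟨m - 1, by omega⟩ with hf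
  set S : Set Ordinal := {τ' | τ' ≤ η.1 ∧ sSup (f '' Set.Iio τ') < β} with hS
  have hSbdd : BddAbove S := BddAbove.mono (fun x hx => hx.1) bddAbove_Iic
  -- part 1: restrP η τ ∈ accSet
  have hacc : restrP m η τ ∈ accSet m (filtLevel m T β) := by
    intro τ' hτ'
    have hτ'lt : τ' < τ := hτ'
    have hSne : S.Nonempty := by
      by_contra hemp
      rw [Set.not_nonempty_iff_eq_empty] at hemp
      rw [hτ, hemp, csSup_empty] at hτ'lt
      exact not_lt_bot hτ'lt
    obtain ⟨τ'', hτ''S, hlt⟩ := exists_lt_of_lt_csSup hSne (hτ ▸ hτ'lt)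
    have hτ''le : τ'' ≤ η.1 := hτ''S.1
    have hϑβ : sSup (f '' Set.Iio τ'') < β := hτ''S.2
    have heq : restrP m (restrP m η τ) τ' = restrP m η τ' := by
      unfold restrP
      refine Prod.ext rfl ?_
      funext i k
      by_cases h : i < τ'
      · simp [h, lt_trans h hτ'lt]
      · simp [h]
    rw [heq]
    refine ⟨hclosed η hη τ' (le_of_lt (lt_of_lt_of_le (lt_trans hτ'lt hτlt) le_rfl)), ?_⟩
    refine ⟨sSup (f '' Set.Iio τ''), hϑβ, ?_⟩
    intro i hi k
    simp only [restrP] at hi ⊢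
    rw [if_pos hi]
    have hiη : i < η.1 := lt_trans (lt_trans hi hτ'lt) hτlt
    have hi1η : i + 1 < η.1 := by
      have : i + 1 ≤ τ' := Order.add_one_le_iff.mpr hi
      exact lt_of_le_of_lt this (lt_trans hτ'lt hτlt)
    have h1 : η.2 i k ≤ f i := hdomin i hiη k
    have h2 : f i < f (i + 1) := hmono i (i + 1) (lt_add_one i) hi1η
    have hτ''τ : τ'' ≤ τ := hτ ▸ le_csSup hSbdd hτ''S
    have h3 : f (i + 1) ≤ sSup (f '' Set.Iio τ'') := by
      apply le_csSup
      · refine ⟨f τ, ?_⟩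
        rintro x ⟨j, hj, rfl⟩
        exact le_of_lt (hmono j τ (lt_of_lt_of_le hj hτ''τ) hτlt)
      · exact ⟨i + 1, lt_of_le_of_lt (Order.add_one_le_iff.mpr hi) hlt, rfl⟩
    exact lt_of_le_of_lt h1 (lt_of_lt_of_le h2 h3)
  have hmem : restrP m η τ ∈ filtLevel m T β := by
    by_contra h
    exact hnacc ⟨hacc, h⟩
  refine ⟨hmem, ?_⟩
  -- part 2
  intro hbad
  obtain ⟨-, ϑ, hϑβ, hb⟩ := hbad
  have hτ1 : τ + 1 ∈ S := by
    constructor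
    · exact Order.add_one_le_iff.mpr hτlt
    · refine lt_of_le_of_lt ?_ hϑβ
      refine csSup_le ⟨f τ, ⟨τ, lt_add_one τ, rfl⟩⟩ ?_
      rintro x ⟨i, hi, rfl⟩
      simp only [Set.mem_Iio] at hi
      have := hb i hi ⟨m - 1, by omega⟩
      simp only [restrP] at this
      rw [if_pos hi] at this
      exact le_of_lt this
  have h := le_csSup hSbdd hτ1
  rw [← hτ] at h
  exact (Order.add_one_le_iff.mp h).false
end
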